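/- Let ℓ be an odd prime and n ≥ 1. The ℓ-power map A ↦ A^ℓ, restricted to matrices in GL₂(ℤ_ℓ) whose reduction mod ℓ^{n+1} has the form [[1 + ℓ^n·a, 0], [ℓ^n·b, 1]], induces an injective map from the set of such reductions mod ℓ^{n+1} to the set of matrices mod ℓ^{n+2} of the form [[1 + ℓ^{n+1}·a, 0], [ℓ^{n+1}·b, 1]]: if A and B both reduce mod ℓ^{n+2} to matrices of the form [[1 + ℓ^n·*, ℓ^{n+1}·*], [ℓ^n·*, 1 + ℓ^{n+1}·*]] and A^ℓ ≡ B^ℓ (mod ℓ^{n+2}), then A ≡ B (mod ℓ^{n+1}). -/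

import Mathlib

lemma keyz (ℓ n : ℕ) [Fact ℓ.Prime] (hn : 1 ≤ n) (hl3 : 3 ≤ ℓ)
    (k : ℕ) (hk2 : 2 ≤ k) (hkl : k ≤ ℓ) :
    ((ℓ ^ (n * k) * ℓ.choose k : ℕ) : ZMod (ℓ ^ (n + 2))) = 0 := by
  rw [ZMod.natCast_eq_zero_iff]
  rcases eq_or_lt_of_le hk2 with rfl | hk3
  · have h1 : ℓ ^ (n + 1) ∣ ℓ ^ (n * 2) := pow_dvd_pow ℓ (by omega)
    have h2 : ℓ ∣ ℓ.choose 2 :=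
      Nat.Prime.dvd_choose_self (Fact.out) (by norm_num) (by omega)
    calc ℓ ^ (n + 2) = ℓ ^ (n + 1) * ℓ := by ring
    _ ∣ ℓ ^ (n * 2) * ℓ.choose 2 := mul_dvd_mul h1 h2
  · exact dvd_mul_of_dvd_left (pow_dvd_pow ℓ (by nlinarith)) _

open Finset in
lemma key (ℓ n : ℕ) [Fact ℓ.Prime] (hodd : Odd ℓ) (hn : 1 ≤ n)
    (C : Matrix (Fin 2) (Fin 2) (ZMod (ℓ ^ (n + 2)))) :
    ((ℓ : ZMod (ℓ ^ (n + 2))) ^ n • C + 1) ^ ℓ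
      = 1 + (ℓ : ZMod (ℓ ^ (n + 2))) ^ (n + 1) • C := by
  have hl3 : 3 ≤ ℓ := by
    have hp := (Fact.out : ℓ.Prime).two_le
    rcases hodd with ⟨m, rfl⟩
    omega
  rw [Commute.add_pow (Commute.one_right _)]
  obtain ⟨m, hm⟩ : ∃ m, ℓ + 1 = m + 2 := ⟨ℓ - 1, by omega⟩
  rw [hm, Finset.sum_range_succ', Finset.sum_range_succ']
  have hz : ∀ k, 2 ≤ k → k ≤ ℓ →
      ((ℓ : ZMod (ℓ ^ (n + 2))) ^ n • C) ^ k *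
        ((ℓ.choose k : ℕ) : Matrix (Fin 2) (Fin 2) (ZMod (ℓ ^ (n + 2)))) = 0 := by
    intro k hk2 hkl
    rw [smul_pow, ← nsmul_eq_mul', ← Nat.cast_smul_eq_nsmul (ZMod (ℓ ^ (n + 2))), smul_smul]
    rw [← pow_mul]
    have : ((ℓ.choose k : ZMod (ℓ ^ (n+2))) * (ℓ : ZMod (ℓ ^ (n+2))) ^ (n * k)) = 0 := by
      have := keyz ℓ n hn hl3 k hk2 hkl
      push_cast at this
      rw [mul_comm] at this
      exact this
    rw [this, zero_smul]
  simp only [one_pow, mul_one]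
  rw [Finset.sum_eq_zero fun i hi => hz (i + 1 + 1) (by omega)
    (by simp only [Finset.mem_range] at hi; omega)]
  simp only [one_pow, mul_one, zero_add, pow_zero, pow_one, Nat.choose_one_right,
    Nat.choose_zero_right, Nat.cast_one]
  rw [← nsmul_eq_mul', ← Nat.cast_smul_eq_nsmul (ZMod (ℓ ^ (n + 2))), smul_smul]
  rw [show ((ℓ : ZMod (ℓ ^ (n + 2))) ^ (n + 1)) = ℓ * ℓ ^ n from pow_succ' _ _]
  exact add_comm _ _

theorem stmt_4 (ℓ n : ℕ) [Fact ℓ.Prime] (hodd : Odd ℓ) (hn : 1 ≤ n)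
    (A B : Matrix (Fin 2) (Fin 2) ℤ_[ℓ])
    (hA : ∃ a j b k : ℤ, A.map (PadicInt.toZModPow (n + 2)) =
      (!![1 + (ℓ : ℤ) ^ n * a, (ℓ : ℤ) ^ (n + 1) * j;
          (ℓ : ℤ) ^ n * b, 1 + (ℓ : ℤ) ^ (n + 1) * k]).map
        (Int.cast : ℤ → ZMod (ℓ ^ (n + 2))))
    (hB : ∃ x z y w : ℤ, B.map (PadicInt.toZModPow (n + 2)) =
      (!![1 + (ℓ : ℤ) ^ n * x, (ℓ : ℤ) ^ (n + 1) * z;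
          (ℓ : ℤ) ^ n * y, 1 + (ℓ : ℤ) ^ (n + 1) * w]).map
        (Int.cast : ℤ → ZMod (ℓ ^ (n + 2))))
    (hpow : (A ^ ℓ).map (PadicInt.toZModPow (n + 2)) =
      (B ^ ℓ).map (PadicInt.toZModPow (n + 2))) :
    A.map (PadicInt.toZModPow (n + 1)) = B.map (PadicInt.toZModPow (n + 1)) := by
  obtain ⟨a, j, b, k, hA⟩ := hA
  obtain ⟨x, z, y, w, hB⟩ := hB
  set R := ZMod (ℓ ^ (n + 2))
  have hCA : (!![1 + (ℓ : ℤ) ^ n * a, (ℓ : ℤ) ^ (n + 1) * j;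
          (ℓ : ℤ) ^ n * b, 1 + (ℓ : ℤ) ^ (n + 1) * k]).map
        (Int.cast : ℤ → R)
      = (ℓ : R) ^ n • (!![a, ℓ * j; b, ℓ * k]).map (Int.cast : ℤ → R) + 1 := by
    ext i j'
    fin_cases i <;> fin_cases j' <;>
      simp [Matrix.one_apply] <;> simp only [R] <;> push_cast <;> ring
  have hCB : (!![1 + (ℓ : ℤ) ^ n * x, (ℓ : ℤ) ^ (n + 1) * z;
          (ℓ : ℤ) ^ n * y, 1 + (ℓ : ℤ) ^ (n + 1) * w]).map
        (Int.cast : ℤ → R)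
      = (ℓ : R) ^ n • (!![x, ℓ * z; y, ℓ * w]).map (Int.cast : ℤ → R) + 1 := by
    ext i j'
    fin_cases i <;> fin_cases j' <;>
      simp [Matrix.one_apply] <;> simp only [R] <;> push_cast <;> ring
  have hmp : ∀ (M : Matrix (Fin 2) (Fin 2) ℤ_[ℓ]),
      (M ^ ℓ).map (PadicInt.toZModPow (n + 2)) = (M.map (PadicInt.toZModPow (n + 2))) ^ ℓ :=
    fun M => by
      simpa [RingHom.mapMatrix_apply] using map_pow (PadicInt.toZModPow (n + 2)).mapMatrix M ℓ
  have hApow : (A ^ ℓ).map (PadicInt.toZModPow (n + 2))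
      = 1 + (ℓ : R) ^ (n + 1) • (!![a, ℓ * j; b, ℓ * k]).map (Int.cast : ℤ → R) := by
    rw [hmp, hA, hCA, key ℓ n hodd hn]
  have hBpow : (B ^ ℓ).map (PadicInt.toZModPow (n + 2))
      = 1 + (ℓ : R) ^ (n + 1) • (!![x, ℓ * z; y, ℓ * w]).map (Int.cast : ℤ → R) := by
    rw [hmp, hB, hCB, key ℓ n hodd hn]
  have hsm : (ℓ : R) ^ (n + 1) • (!![a, ℓ * j; b, ℓ * k]).map (Int.cast : ℤ → R)
      = (ℓ : R) ^ (n + 1) • (!![x, ℓ * z; y, ℓ * w]).map (Int.cast : ℤ → R) := by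
    have h := hpow
    rw [hApow, hBpow] at h
    exact add_left_cancel h
  have h00 := congrFun (congrFun hsm 0) 0
  have h10 := congrFun (congrFun hsm 1) 0
  simp only [Matrix.smul_apply, Matrix.map_apply, Matrix.cons_val', Matrix.cons_val_zero,
    Matrix.empty_val', Matrix.cons_val_fin_one, Matrix.cons_val_one, Matrix.head_cons,
    Matrix.head_fin_const, smul_eq_mul, Matrix.of_apply] at h00 h10
  have hl0 : (ℓ : ℤ) ≠ 0 := by
    exact_mod_cast (Fact.out : ℓ.Prime).ne_zero
  have e00 : (((ℓ : ℤ) ^ (n + 1) * a : ℤ) : R) = (((ℓ : ℤ) ^ (n + 1) * x : ℤ) : R) := by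
    simp only [R] at h00 ⊢
    push_cast
    exact_mod_cast h00
  have e10 : (((ℓ : ℤ) ^ (n + 1) * b : ℤ) : R) = (((ℓ : ℤ) ^ (n + 1) * y : ℤ) : R) := by
    simp only [R] at h10 ⊢
    push_cast
    exact_mod_cast h10
  have hdvd1 : (ℓ : ℤ) ∣ x - a := by
    have hd := ((ZMod.intCast_eq_intCast_iff _ _ _).mp e00).dvd
    have h2 : (ℓ : ℤ) ^ (n + 1) * (ℓ : ℤ) ∣ (ℓ : ℤ) ^ (n + 1) * (x - a) := by
      have he : ((ℓ ^ (n + 2) : ℕ) : ℤ) = (ℓ : ℤ) ^ (n + 1) * ℓ := by push_cast; ring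
      rw [he] at hd
      calc (ℓ : ℤ) ^ (n + 1) * ℓ ∣ (ℓ : ℤ) ^ (n + 1) * x - (ℓ : ℤ) ^ (n + 1) * a := hd
      _ = (ℓ : ℤ) ^ (n + 1) * (x - a) := by ring
    exact (mul_dvd_mul_iff_left (pow_ne_zero _ hl0)).mp h2
  have hdvd2 : (ℓ : ℤ) ∣ y - b := by
    have hd := ((ZMod.intCast_eq_intCast_iff _ _ _).mp e10).dvd
    have h2 : (ℓ : ℤ) ^ (n + 1) * (ℓ : ℤ) ∣ (ℓ : ℤ) ^ (n + 1) * (y - b) := by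
      have he : ((ℓ ^ (n + 2) : ℕ) : ℤ) = (ℓ : ℤ) ^ (n + 1) * ℓ := by push_cast; ring
      rw [he] at hd
      calc (ℓ : ℤ) ^ (n + 1) * ℓ ∣ (ℓ : ℤ) ^ (n + 1) * y - (ℓ : ℤ) ^ (n + 1) * b := hd
      _ = (ℓ : ℤ) ^ (n + 1) * (y - b) := by ring
    exact (mul_dvd_mul_iff_left (pow_ne_zero _ hl0)).mp h2
  have hcast : ∀ (M : Matrix (Fin 2) (Fin 2) ℤ_[ℓ]), M.map (PadicInt.toZModPow (n + 1))
      = (M.map (PadicInt.toZModPow (n + 2))).map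
          (ZMod.castHom (pow_dvd_pow ℓ (by omega : n + 1 ≤ n + 2)) (ZMod (ℓ ^ (n + 1)))) :=
    fun M => by
      rw [Matrix.map_map, ← RingHom.coe_comp,
        PadicInt.zmod_cast_comp_toZModPow _ _ (by omega : n + 1 ≤ n + 2)]
  have hdd : (ℓ ^ (n + 1) : ℕ) ∣ ℓ ^ (n + 2) := pow_dvd_pow ℓ (by omega)
  have g1 : ((1 + (ℓ : ℤ) ^ n * a : ℤ) : ZMod (ℓ ^ (n + 1)))
      = ((1 + (ℓ : ℤ) ^ n * x : ℤ) : ZMod (ℓ ^ (n + 1))) := by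
    rw [ZMod.intCast_eq_intCast_iff]
    apply Int.ModEq.add_left
    rw [Int.modEq_iff_dvd]
    obtain ⟨c, hc⟩ := hdvd1
    refine ⟨c, ?_⟩
    push_cast
    rw [show (ℓ : ℤ) ^ n * x - (ℓ : ℤ) ^ n * a = (ℓ : ℤ) ^ n * (x - a) by ring, hc]
    ring
  have g3 : (((ℓ : ℤ) ^ n * b : ℤ) : ZMod (ℓ ^ (n + 1)))
      = (((ℓ : ℤ) ^ n * y : ℤ) : ZMod (ℓ ^ (n + 1))) := by
    rw [ZMod.intCast_eq_intCast_iff]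
    rw [Int.modEq_iff_dvd]
    obtain ⟨c, hc⟩ := hdvd2
    refine ⟨c, ?_⟩
    push_cast
    rw [show (ℓ : ℤ) ^ n * y - (ℓ : ℤ) ^ n * b = (ℓ : ℤ) ^ n * (y - b) by ring, hc]
    ring
  have g2 : (((ℓ : ℤ) ^ (n + 1) * j : ℤ) : ZMod (ℓ ^ (n + 1)))
      = (((ℓ : ℤ) ^ (n + 1) * z : ℤ) : ZMod (ℓ ^ (n + 1))) := by
    rw [ZMod.intCast_eq_intCast_iff, Int.modEq_iff_dvd]
    refine ⟨z - j, ?_⟩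
    push_cast
    ring
  have g4 : ((1 + (ℓ : ℤ) ^ (n + 1) * k : ℤ) : ZMod (ℓ ^ (n + 1)))
      = ((1 + (ℓ : ℤ) ^ (n + 1) * w : ℤ) : ZMod (ℓ ^ (n + 1))) := by
    rw [ZMod.intCast_eq_intCast_iff, Int.modEq_iff_dvd]
    refine ⟨w - k, ?_⟩
    push_cast
    ring
  rw [hcast A, hcast B, hA, hB, Matrix.map_map, Matrix.map_map]
  ext i j'
  fin_cases i <;> fin_cases j' <;> simp [Matrix.map_apply, map_intCast]
  · rw [show ((1 : R) + (ℓ : R) ^ n * (a : R)) = ((1 + (ℓ : ℤ) ^ n * a : ℤ) : R) by simp only [R]; push_cast; ring,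
      show ((1 : R) + (ℓ : R) ^ n * (x : R)) = ((1 + (ℓ : ℤ) ^ n * x : ℤ) : R) by simp only [R]; push_cast; ring,
      ZMod.cast_intCast hdd, ZMod.cast_intCast hdd]
    exact g1
  · rw [show ((ℓ : R) ^ (n + 1) * (j : R)) = (((ℓ : ℤ) ^ (n + 1) * j : ℤ) : R) by simp only [R]; push_cast; ring,
      show ((ℓ : R) ^ (n + 1) * (z : R)) = (((ℓ : ℤ) ^ (n + 1) * z : ℤ) : R) by simp only [R]; push_cast; ring,
      ZMod.cast_intCast hdd, ZMod.cast_intCast hdd]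
    exact g2
  · rw [show ((ℓ : R) ^ n * (b : R)) = (((ℓ : ℤ) ^ n * b : ℤ) : R) by simp only [R]; push_cast; ring,
      show ((ℓ : R) ^ n * (y : R)) = (((ℓ : ℤ) ^ n * y : ℤ) : R) by simp only [R]; push_cast; ring,
      ZMod.cast_intCast hdd, ZMod.cast_intCast hdd]
    exact g3
  · rw [show ((1 : R) + (ℓ : R) ^ (n + 1) * (k : R)) = ((1 + (ℓ : ℤ) ^ (n + 1) * k : ℤ) : R) by simp only [R]; push_cast; ring,
      show ((1 : R) + (ℓ : R) ^ (n + 1) * (w : R)) = ((1 + (ℓ : ℤ) ^ (n + 1) * w : ℤ) : R) by simp only [R]; push_cast; ring,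
      ZMod.cast_intCast hdd, ZMod.cast_intCast hdd]
    exact g4
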